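/- Let A, B > 0 be constants, set ξ̂ := (3B/(2A))^{1/3} and h := (A/2)·ξ̂². Define ϖ(ξ) = -ξ⁴/(8ξ̂³) + 3ξ²/(4ξ̂) for |ξ| ≤ ξ̂ and ϖ(ξ) = |ξ| - 3ξ̂/8 otherwise. Then for every ξ ∈ ℝ, max{ -(A/2)ξ² + h - (B/2)ϖ''(ξ), -1 + ϖ'(ξ), -1 - ϖ'(ξ) } = 0. -/

import Mathlib

open Set Filter

private lemma glue_deriv {f fl fr : ℝ → ℝ} {a d : ℝ}
    (hl : HasDerivAt fl d a) (hr : HasDerivAt fr d a)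
    (hle : f =ᶠ[nhdsWithin a (Set.Iic a)] fl) (hre : f =ᶠ[nhdsWithin a (Set.Ici a)] fr)
    (hfa : f a = fl a) (hfa' : f a = fr a) : HasDerivAt f d a := by
  have h1 : HasDerivWithinAt f d (Set.Iic a) a :=
    (hl.hasDerivWithinAt).congr_of_eventuallyEq hle hfa
  have h2 : HasDerivWithinAt f d (Set.Ici a) a :=
    (hr.hasDerivWithinAt).congr_of_eventuallyEq hre hfa'
  have h3 := h1.union h2
  rw [Set.Iic_union_Ici] at h3
  exact (hasDerivWithinAt_univ).mp h3

set_option maxHeartbeats 1000000 in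
theorem stmt3 (A B : ℝ) (hA : 0 < A) (hB : 0 < B) (ξh h : ℝ)
    (hξh : ξh = (3*B/(2*A)) ^ ((1:ℝ)/3)) (hh : h = A/2*ξh^2)
    (ϖ : ℝ → ℝ)
    (hmid : ∀ ξ : ℝ, |ξ| ≤ ξh → ϖ ξ = -ξ^4/(8*ξh^3) + 3*ξ^2/(4*ξh))
    (hout : ∀ ξ : ℝ, ξh ≤ |ξ| → ϖ ξ = |ξ| - 3*ξh/8) :
    ∀ ξ : ℝ,
      max (max (-(A/2)*ξ^2 + h - B/2 * deriv (deriv ϖ) ξ)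
        (-1 + deriv ϖ ξ)) (-1 - deriv ϖ ξ) = 0 := by
  have hc : 0 < ξh := by
    rw [hξh]; positivity
  have hc' : ξh ≠ 0 := ne_of_gt hc
  have habs1 : |ξh| ≤ ξh := le_of_eq (abs_of_nonneg hc.le)
  have habs2 : |(-ξh)| ≤ ξh := by rw [abs_neg]; exact habs1
  have hcube : ξh ^ 3 = 3*B/(2*A) := by
    rw [hξh, ← Real.rpow_natCast ((3*B/(2*A)) ^ ((1:ℝ)/3)) 3, ← Real.rpow_mul (by positivity)]
    norm_num
  have h3B : 2*A*ξh^3 = 3*B := by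
    rw [hcube]; field_simp
  -- the inner polynomial and its derivatives
  set p : ℝ → ℝ := fun x => -(x^4)/(8*ξh^3) + 3*x^2/(4*ξh) with hp_def
  set p1 : ℝ → ℝ := fun x => -(x^3)/(2*ξh^3) + 3*x/(2*ξh) with hp1_def
  set p2 : ℝ → ℝ := fun x => -(3*x^2)/(2*ξh^3) + 3/(2*ξh) with hp2_def
  have hp : ∀ x : ℝ, HasDerivAt p (p1 x) x := by
    intro x
    have h1 : HasDerivAt (fun y : ℝ => y^4) (4*x^3) x := by
      simpa using hasDerivAt_pow 4 x
    have h2 : HasDerivAt (fun y : ℝ => y^2) (2*x) x := by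
      simpa using hasDerivAt_pow 2 x
    have hsum := ((h1.div_const (8*ξh^3)).neg).add ((h2.const_mul 3).div_const (4*ξh))
    have hfun : p = fun y : ℝ => -(y^4 / (8*ξh^3)) + 3 * y^2 / (4*ξh) := by
      funext y; simp only [hp_def]; ring
    have hval : p1 x = -(4*x^3 / (8*ξh^3)) + 3 * (2*x) / (4*ξh) := by
      simp only [hp1_def]; field_simp; ring
    rw [hfun, hval]
    exact hsum
  have hp1 : ∀ x : ℝ, HasDerivAt p1 (p2 x) x := by
    intro x
    have h1 : HasDerivAt (fun y : ℝ => y^3) (3*x^2) x := by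
      simpa using hasDerivAt_pow 3 x
    have h2 : HasDerivAt (fun y : ℝ => y) (1:ℝ) x := hasDerivAt_id x
    have hsum := ((h1.div_const (2*ξh^3)).neg).add ((h2.const_mul 3).div_const (2*ξh))
    have hfun : p1 = fun y : ℝ => -(y^3 / (2*ξh^3)) + 3 * y / (2*ξh) := by
      funext y; simp only [hp1_def]; ring
    have hval : p2 x = -(3*x^2 / (2*ξh^3)) + 3 * 1 / (2*ξh) := by
      simp only [hp2_def]; field_simp; try ring
    rw [hfun, hval]
    exact hsum
  -- values of ϖ on the pieces
  have hϖp : ∀ x : ℝ, |x| ≤ ξh → ϖ x = p x := by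
    intro x hx
    rw [hmid x hx, hp_def]
    try ring
  have hϖr : ∀ x : ℝ, ξh ≤ x → ϖ x = x - 3*ξh/8 := by
    intro x hx
    have hax : |x| = x := abs_of_nonneg (le_trans hc.le hx)
    rw [hout x (by rw [hax]; exact hx), hax]
  have hϖl : ∀ x : ℝ, x ≤ -ξh → ϖ x = -x - 3*ξh/8 := by
    intro x hx
    have hax : |x| = -x := abs_of_nonpos (by linarith)
    rw [hout x (by rw [hax]; linarith), hax]
  have hqr : ∀ x : ℝ, HasDerivAt (fun y : ℝ => y - 3*ξh/8) 1 x := by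
    intro x; simpa using (hasDerivAt_id x).sub_const (3*ξh/8)
  have hql : ∀ x : ℝ, HasDerivAt (fun y : ℝ => -y - 3*ξh/8) (-1) x := by
    intro x; simpa using ((hasDerivAt_id x).neg).sub_const (3*ξh/8)
  -- boundary derivative values
  have hp1r : p1 ξh = 1 := by simp only [hp1_def]; field_simp; ring
  have hp1l : p1 (-ξh) = -1 := by simp only [hp1_def]; field_simp; ring
  have hp2r : p2 ξh = 0 := by simp only [hp2_def]; field_simp; ring
  have hp2l : p2 (-ξh) = 0 := by simp only [hp2_def]; field_simp; ring
  -- first derivative everywhere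
  set ψ : ℝ → ℝ := fun x => if |x| ≤ ξh then p1 x else if 0 < x then 1 else -1 with hψ_def
  have hopen_in : IsOpen {x : ℝ | |x| < ξh} := isOpen_lt continuous_abs continuous_const
  have hd1 : ∀ x : ℝ, HasDerivAt ϖ (ψ x) x := by
    intro x
    rcases lt_trichotomy (|x|) ξh with hx | hx | hx
    · -- interior
      have hev : ϖ =ᶠ[nhds x] p := by
        refine Filter.eventuallyEq_of_mem (hopen_in.mem_nhds hx) ?_
        intro y hy; exact hϖp y (le_of_lt hy)
      have hres := (hp x).congr_of_eventuallyEq hev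
      simp only [hψ_def]
      rw [if_pos (le_of_lt hx)]
      exact hres
    · -- boundary
      rcases (abs_eq hc.le).mp hx with h' | h'
      · -- x = ξh
        rw [h']
        have hev : ψ ξh = 1 := by simp only [hψ_def]; rw [if_pos habs1, hp1r]
        rw [hev]
        refine glue_deriv (fl := p) (fr := fun y => y - 3*ξh/8) ?_ (hqr ξh) ?_ ?_ ?_ ?_
        · rw [← hp1r]; exact hp ξh
        · refine Filter.eventuallyEq_of_mem (Filter.inter_mem
            (nhdsWithin_le_nhds (Ioi_mem_nhds (by linarith : -ξh < ξh))) self_mem_nhdsWithin) ?_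
          rintro y ⟨hy1, hy2⟩
          exact hϖp y (abs_le.mpr ⟨le_of_lt hy1, hy2⟩)
        · refine Filter.eventuallyEq_of_mem self_mem_nhdsWithin ?_
          intro y hy; exact hϖr y hy
        · exact hϖp ξh habs1
        · exact hϖr ξh le_rfl
      · -- x = -ξh
        rw [h']
        have hev : ψ (-ξh) = -1 := by
          simp only [hψ_def]; rw [if_pos habs2, hp1l]
        rw [hev]
        refine glue_deriv (fl := fun y => -y - 3*ξh/8) (fr := p) (hql (-ξh)) ?_ ?_ ?_ ?_ ?_
        · rw [← hp1l]; exact hp (-ξh)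
        · refine Filter.eventuallyEq_of_mem self_mem_nhdsWithin ?_
          intro y hy; exact hϖl y hy
        · refine Filter.eventuallyEq_of_mem (Filter.inter_mem
            (nhdsWithin_le_nhds (Iio_mem_nhds (by linarith : -ξh < ξh))) self_mem_nhdsWithin) ?_
          rintro y ⟨hy1, hy2⟩
          exact hϖp y (abs_le.mpr ⟨hy2, le_of_lt hy1⟩)
        · exact hϖl (-ξh) le_rfl
        · exact hϖp (-ξh) habs2
    · -- outside
      rcases lt_abs.mp hx with hx1 | hx1
      · have hev : ϖ =ᶠ[nhds x] fun y => y - 3*ξh/8 := by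
          refine Filter.eventuallyEq_of_mem (Ioi_mem_nhds hx1) ?_
          intro y hy; exact hϖr y (le_of_lt hy)
        have hres := (hqr x).congr_of_eventuallyEq hev
        simp only [hψ_def]
        rw [if_neg (not_le.mpr hx), if_pos (by linarith)]
        exact hres
      · have hx1' : x < -ξh := by linarith
        have hev : ϖ =ᶠ[nhds x] fun y => -y - 3*ξh/8 := by
          refine Filter.eventuallyEq_of_mem (Iio_mem_nhds hx1') ?_
          intro y hy; exact hϖl y (le_of_lt hy)
        have hres := (hql x).congr_of_eventuallyEq hev
        simp only [hψ_def]
        rw [if_neg (not_le.mpr hx), if_neg (by push_neg; linarith)]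
        exact hres
  have hderiv1 : deriv ϖ = ψ := funext fun x => (hd1 x).deriv
  -- second derivative everywhere
  set χ : ℝ → ℝ := fun x => if |x| ≤ ξh then p2 x else 0 with hχ_def
  have hψp : ∀ x : ℝ, |x| ≤ ξh → ψ x = p1 x := by
    intro x hx; simp only [hψ_def]; rw [if_pos hx]
  have hψr : ∀ x : ℝ, ξh ≤ x → ψ x = 1 := by
    intro x hx
    rcases eq_or_lt_of_le hx with h' | hx'
    · rw [← h', hψp ξh habs1, hp1r]
    · have hax : ξh < |x| := by rw [abs_of_pos (lt_trans hc hx')]; exact hx'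
      simp only [hψ_def]
      rw [if_neg (not_le.mpr hax), if_pos (lt_trans hc hx')]
  have hψl : ∀ x : ℝ, x ≤ -ξh → ψ x = -1 := by
    intro x hx
    rcases eq_or_lt_of_le hx with h' | hx'
    · rw [h', hψp (-ξh) habs2, hp1l]
    · have hax : ξh < |x| := by rw [abs_of_neg (by linarith)]; linarith
      simp only [hψ_def]
      rw [if_neg (not_le.mpr hax), if_neg (by push_neg; linarith)]
  have hd2 : ∀ x : ℝ, HasDerivAt ψ (χ x) x := by
    intro x
    rcases lt_trichotomy (|x|) ξh with hx | hx | hx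
    · have hev : ψ =ᶠ[nhds x] p1 := by
        refine Filter.eventuallyEq_of_mem (hopen_in.mem_nhds hx) ?_
        intro y hy; exact hψp y (le_of_lt hy)
      have hres := (hp1 x).congr_of_eventuallyEq hev
      simp only [hχ_def]
      rw [if_pos (le_of_lt hx)]
      exact hres
    · rcases (abs_eq hc.le).mp hx with h' | h'
      · rw [h']
        have hev : χ ξh = 0 := by simp only [hχ_def]; rw [if_pos habs1, hp2r]
        rw [hev]
        refine glue_deriv (fl := p1) (fr := fun _ => (1:ℝ)) ?_ (hasDerivAt_const ξh 1) ?_ ?_ ?_ ?_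
        · rw [← hp2r]; exact hp1 ξh
        · refine Filter.eventuallyEq_of_mem (Filter.inter_mem
            (nhdsWithin_le_nhds (Ioi_mem_nhds (by linarith : -ξh < ξh))) self_mem_nhdsWithin) ?_
          rintro y ⟨hy1, hy2⟩
          exact hψp y (abs_le.mpr ⟨le_of_lt hy1, hy2⟩)
        · refine Filter.eventuallyEq_of_mem self_mem_nhdsWithin ?_
          intro y hy; exact hψr y hy
        · exact hψp ξh habs1
        · exact hψr ξh le_rfl
      · rw [h']
        have hev : χ (-ξh) = 0 := by
          simp only [hχ_def]; rw [if_pos habs2, hp2l]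
        rw [hev]
        refine glue_deriv (fl := fun _ => (-1:ℝ)) (fr := p1)
          (hasDerivAt_const (-ξh) (-1)) ?_ ?_ ?_ ?_ ?_
        · rw [← hp2l]; exact hp1 (-ξh)
        · refine Filter.eventuallyEq_of_mem self_mem_nhdsWithin ?_
          intro y hy; exact hψl y hy
        · refine Filter.eventuallyEq_of_mem (Filter.inter_mem
            (nhdsWithin_le_nhds (Iio_mem_nhds (by linarith : -ξh < ξh))) self_mem_nhdsWithin) ?_
          rintro y ⟨hy1, hy2⟩
          exact hψp y (abs_le.mpr ⟨hy2, le_of_lt hy1⟩)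
        · exact hψl (-ξh) le_rfl
        · exact hψp (-ξh) habs2
    · rcases lt_abs.mp hx with hx1 | hx1
      · have hev : ψ =ᶠ[nhds x] fun _ => (1:ℝ) := by
          refine Filter.eventuallyEq_of_mem (Ioi_mem_nhds hx1) ?_
          intro y hy; exact hψr y (le_of_lt hy)
        have hres := (hasDerivAt_const x (1:ℝ)).congr_of_eventuallyEq hev
        simp only [hχ_def]
        rw [if_neg (not_le.mpr hx)]
        exact hres
      · have hx1' : x < -ξh := by linarith
        have hev : ψ =ᶠ[nhds x] fun _ => (-1:ℝ) := by
          refine Filter.eventuallyEq_of_mem (Iio_mem_nhds hx1') ?_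
          intro y hy; exact hψl y (le_of_lt hy)
        have hres := (hasDerivAt_const x (-1:ℝ)).congr_of_eventuallyEq hev
        simp only [hχ_def]
        rw [if_neg (not_le.mpr hx)]
        exact hres
  have hderiv2 : deriv (deriv ϖ) = χ := by
    rw [hderiv1]; exact funext fun x => (hd2 x).deriv
  -- final computation
  intro ξ
  rw [hderiv2, hderiv1]
  by_cases hx : |ξ| ≤ ξh
  · -- inner region
    have hb := abs_le.mp hx
    have hterm1 : -(A/2)*ξ^2 + h - B/2 * χ ξ = 0 := by
      simp only [hχ_def]
      rw [if_pos hx, hp2_def, hh]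
      field_simp
      linear_combination (ξh^2 - ξ^2) * h3B
    have hψval : ψ ξ = p1 ξ := hψp ξ hx
    have hfrac : p1 ξ = (3*ξ*ξh^2 - ξ^3)/(2*ξh^3) := by
      simp only [hp1_def]; field_simp; ring
    have hub : -1 + ψ ξ ≤ 0 := by
      rw [hψval, hfrac]
      have hnum : 3*ξ*ξh^2 - ξ^3 ≤ 2*ξh^3 := by
        nlinarith [mul_nonneg (sq_nonneg (ξh - ξ)) (by linarith : (0:ℝ) ≤ ξ + 2*ξh)]
      have hd1le := (div_le_one (by positivity : (0:ℝ) < 2*ξh^3)).mpr hnum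
      linarith
    have hlb : -1 - ψ ξ ≤ 0 := by
      rw [hψval, hfrac]
      have hnum : (-1:ℝ) * (2*ξh^3) ≤ 3*ξ*ξh^2 - ξ^3 := by
        nlinarith [mul_nonneg (sq_nonneg (ξh + ξ)) (by linarith : (0:ℝ) ≤ 2*ξh - ξ)]
      have hd1ge := (le_div_iff₀ (by positivity : (0:ℝ) < 2*ξh^3)).mpr hnum
      linarith
    rw [hterm1, max_eq_left hub, max_eq_left hlb]
  · -- outer region
    push_neg at hx
    have hterm1 : -(A/2)*ξ^2 + h - B/2 * χ ξ ≤ 0 := by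
      simp only [hχ_def]
      rw [if_neg (not_le.mpr hx), hh]
      have hsq : ξh^2 < ξ^2 := by
        rw [← sq_abs ξ]
        exact pow_lt_pow_left₀ hx hc.le two_ne_zero
      nlinarith
    rcases lt_abs.mp hx with hx1 | hx1
    · rw [hψr ξ hx1.le, show (-1:ℝ) + 1 = 0 by norm_num, show (-1:ℝ) - 1 = -2 by norm_num,
        max_eq_right hterm1, max_eq_left (by norm_num : (-2:ℝ) ≤ 0)]
    · rw [hψl ξ (by linarith), show (-1:ℝ) + -1 = -2 by norm_num,
        show (-1:ℝ) - -1 = 0 by norm_num,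
        max_eq_right (max_le hterm1 (by norm_num : (-2:ℝ) ≤ (0:ℝ)))]
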